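/- Let n ≥ 1, λ ∈ ℂ^n, and let A be the diagonal n×n complex matrix with diagonal entries λ_1, …, λ_n. Let c : ((Fin n → ℕ) × ℤ) → ℂ be finitely supported, and define H : ℂ^n × ℝ → ℂ by H(y,t) = Σ_{(l,k)} c(l,k) (∏_s y_s^{l_s}) e^{i k t}. If ∂_t H(y,t) + (D_y H(y,t))(A y) = 0 for all y ∈ ℂ^n and t ∈ ℝ, then c(l,k) = 0 for every (l,k) with i k + ⟨l,λ⟩ ≠ 0, where ⟨l,λ⟩ = Σ_s l_s λ_s. -/

import Mathlib

open Complex Finset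

lemma hasDerivAt_cexp_int (k : ℤ) (t : ℝ) :
    HasDerivAt (fun τ : ℝ => Complex.exp (Complex.I * (k : ℂ) * (τ : ℂ)))
      (Complex.I * (k : ℂ) * Complex.exp (Complex.I * (k : ℂ) * (t : ℂ))) t := by
  have h : HasDerivAt (fun z : ℂ => Complex.exp (Complex.I * (k : ℂ) * z))
      (Complex.exp (Complex.I * (k : ℂ) * (t : ℂ)) * (Complex.I * (k : ℂ) * 1)) (t : ℂ) :=
    ((hasDerivAt_id _).const_mul _).cexp
  have := h.comp_ofReal
  convert this using 1
  ring

noncomputable def pmChar {n : ℕ} (p : (Fin n → ℕ) × ℤ) :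
    ((Fin n → ℂ) × Multiplicative ℝ) →* ℂ where
  toFun m := (∏ s, m.1 s ^ p.1 s) * Complex.exp (Complex.I * (p.2 : ℂ) * ((Multiplicative.toAdd m.2 : ℝ) : ℂ))
  map_one' := by simp
  map_mul' a b := by
    simp only [Prod.fst_mul, Prod.snd_mul, Pi.mul_apply, mul_pow, Finset.prod_mul_distrib,
      toAdd_mul, Complex.ofReal_add, mul_add, Complex.exp_add]
    ring

lemma pmChar_injective {n : ℕ} : Function.Injective (pmChar (n := n)) := by
  intro p q h
  have hval : ∀ m, pmChar p m = pmChar q m := fun m => congrFun (congrArg _ h) m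
  have h1 : ∀ y : Fin n → ℂ, (∏ s, y s ^ p.1 s) = ∏ s, y s ^ q.1 s := by
    intro y
    have := hval (y, (1 : Multiplicative ℝ))
    simpa [pmChar] using this
  have hl : p.1 = q.1 := by
    funext s
    have := h1 (fun j => if j = s then 2 else 1)
    have hps : ∀ r : Fin n → ℕ,
        (∏ j, (if j = s then (2 : ℂ) else 1) ^ r j) = 2 ^ r s := by
      intro r
      rw [Finset.prod_eq_single s (fun b _ hb => by simp [hb]) (by simp)]
      simp
    have h2 : (2 : ℂ) ^ p.1 s = 2 ^ q.1 s := by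
      rw [hps, hps] at this; exact this
    have h3 : (2 : ℕ) ^ p.1 s = 2 ^ q.1 s := by exact_mod_cast h2
    exact Nat.pow_right_injective le_rfl h3
  have h4 : ∀ t : ℝ, Complex.exp (Complex.I * (p.2 : ℂ) * (t : ℂ))
      = Complex.exp (Complex.I * (q.2 : ℂ) * (t : ℂ)) := by
    intro t
    have := hval ((fun _ => 1), Multiplicative.ofAdd t)
    simpa [pmChar] using this
  have hk : p.2 = q.2 := by
    have d1 := hasDerivAt_cexp_int p.2 0
    have d2 := hasDerivAt_cexp_int q.2 0
    have hfun : (fun τ : ℝ => Complex.exp (Complex.I * (p.2 : ℂ) * (τ : ℂ)))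
        = fun τ : ℝ => Complex.exp (Complex.I * (q.2 : ℂ) * (τ : ℂ)) := funext h4
    rw [← hfun] at d2
    have := d1.unique d2
    simp only [Complex.ofReal_zero, mul_zero, Complex.exp_zero, mul_one] at this
    have := mul_left_cancel₀ Complex.I_ne_zero this
    exact_mod_cast this
  exact Prod.ext hl hk

lemma inner_sum_eq {n : ℕ} (l : Fin n → ℕ) (lam y : Fin n → ℂ) :
    (∑ s, (∏ j ∈ Finset.univ.erase s, y j ^ l j) *
        ((l s : ℂ) * y s ^ (l s - 1) * (lam s * y s)))
      = (∑ s, (l s : ℂ) * lam s) * ∏ j, y j ^ l j := by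
  rw [Finset.sum_mul]
  apply Finset.sum_congr rfl
  intro s _
  rw [← Finset.prod_erase_mul Finset.univ _ (Finset.mem_univ s)]
  cases h : l s with
  | zero => simp [h]
  | succ m => simp only [h, Nat.add_sub_cancel, pow_succ]; push_cast; ring

theorem stmt_6 {n : ℕ} (hn : 1 ≤ n) (lam : Fin n → ℂ)
    (A : Matrix (Fin n) (Fin n) ℂ) (hA : A = Matrix.diagonal lam)
    (c : ((Fin n → ℕ) × ℤ) →₀ ℂ)
    (H : (Fin n → ℂ) → ℝ → ℂ)
    (hH : ∀ (y : Fin n → ℂ) (t : ℝ),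
      H y t = c.sum fun p a =>
        a * (∏ s, y s ^ p.1 s) * Complex.exp (Complex.I * (p.2 : ℂ) * (t : ℂ)))
    (hPDE : ∀ (y : Fin n → ℂ) (t : ℝ),
      deriv (fun τ : ℝ => H y τ) t
        + (fderiv ℂ (fun z => H z t) y) (A.mulVec y) = 0) :
    ∀ (l : Fin n → ℕ) (k : ℤ),
      Complex.I * (k : ℂ) + ∑ s, (l s : ℂ) * lam s ≠ 0 → c (l, k) = 0 := by
  -- the key pointwise identity: L̃ H = Σ c p (ik+⟨l,λ⟩) y^l e^{ikt} = 0
  have key : ∀ (y : Fin n → ℂ) (t : ℝ),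
      ∑ p ∈ c.support,
        (c p * (Complex.I * (p.2 : ℂ) + ∑ s, (p.1 s : ℂ) * lam s)) *
          ((∏ s, y s ^ p.1 s) * Complex.exp (Complex.I * (p.2 : ℂ) * (t : ℂ))) = 0 := by
    intro y t
    -- time derivative
    have hT : HasDerivAt
        (fun τ : ℝ => ∑ p ∈ c.support,
          c p * (∏ s, y s ^ p.1 s) * Complex.exp (Complex.I * (p.2 : ℂ) * (τ : ℂ)))
        (∑ p ∈ c.support,
          c p * (∏ s, y s ^ p.1 s) *
            (Complex.I * (p.2 : ℂ) * Complex.exp (Complex.I * (p.2 : ℂ) * (t : ℂ)))) t :=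
      HasDerivAt.fun_sum fun p _ => (hasDerivAt_cexp_int p.2 t).const_mul _
    have eH : (fun τ : ℝ => H y τ)
        = fun τ : ℝ => ∑ p ∈ c.support,
            c p * (∏ s, y s ^ p.1 s) * Complex.exp (Complex.I * (p.2 : ℂ) * (τ : ℂ)) := by
      funext τ; rw [hH]; rfl
    have hderiv : deriv (fun τ : ℝ => H y τ) t
        = ∑ p ∈ c.support,
            c p * (∏ s, y s ^ p.1 s) *
              (Complex.I * (p.2 : ℂ) * Complex.exp (Complex.I * (p.2 : ℂ) * (t : ℂ))) := by
      rw [eH]; exact hT.deriv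
    -- space derivative
    set D : ((Fin n → ℕ) × ℤ) → (Fin n → ℂ) →L[ℂ] ℂ := fun p =>
      Complex.exp (Complex.I * (p.2 : ℂ) * (t : ℂ)) • (c p •
        (∑ s, (∏ j ∈ Finset.univ.erase s, y j ^ p.1 j) •
          (((p.1 s : ℂ) * y s ^ (p.1 s - 1)) •
            (ContinuousLinearMap.proj s : (Fin n → ℂ) →L[ℂ] ℂ)))) with hD
    have hprod : ∀ p : (Fin n → ℕ) × ℤ,
        HasFDerivAt (fun z : Fin n → ℂ => ∏ s, z s ^ p.1 s)
          (∑ s, (∏ j ∈ Finset.univ.erase s, y j ^ p.1 j) •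
            (((p.1 s : ℂ) * y s ^ (p.1 s - 1)) •
              (ContinuousLinearMap.proj s : (Fin n → ℂ) →L[ℂ] ℂ))) y := by
      intro p
      have hproj : ∀ s : Fin n, HasFDerivAt (fun z : Fin n → ℂ => z s)
          (ContinuousLinearMap.proj s : (Fin n → ℂ) →L[ℂ] ℂ) y :=
        fun s => (ContinuousLinearMap.proj (R := ℂ) (φ := fun _ : Fin n => ℂ) s).hasFDerivAt
      exact HasFDerivAt.finset_prod (u := Finset.univ)
        (g := fun s (z : Fin n → ℂ) => z s ^ p.1 s)
        (fun s _ => (hasDerivAt_pow (p.1 s) (y s)).comp_hasFDerivAt y (hproj s))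
    have hYp : ∀ p ∈ c.support, HasFDerivAt
        (fun z : Fin n → ℂ =>
          c p * (∏ s, z s ^ p.1 s) * Complex.exp (Complex.I * (p.2 : ℂ) * (t : ℂ)))
        (D p) y := by
      intro p _
      exact ((hprod p).const_mul (c p)).mul_const _
    have hY : HasFDerivAt (fun z : Fin n → ℂ => H z t) (∑ p ∈ c.support, D p) y := by
      have eH2 : (fun z : Fin n → ℂ => H z t)
          = fun z : Fin n → ℂ => ∑ p ∈ c.support,
              c p * (∏ s, z s ^ p.1 s) * Complex.exp (Complex.I * (p.2 : ℂ) * (t : ℂ)) := by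
        funext z; rw [hH]; rfl
      rw [eH2]
      exact HasFDerivAt.fun_sum hYp
    have hfd := hY.fderiv
    have hpde := hPDE y t
    rw [hderiv, hfd] at hpde
    -- compute the applied sum
    have happ : (∑ p ∈ c.support, D p) (A.mulVec y)
        = ∑ p ∈ c.support,
            c p * (∑ s, (p.1 s : ℂ) * lam s) *
              ((∏ s, y s ^ p.1 s) * Complex.exp (Complex.I * (p.2 : ℂ) * (t : ℂ))) := by
      rw [ContinuousLinearMap.sum_apply]
      apply Finset.sum_congr rfl
      intro p _
      simp only [hD, ContinuousLinearMap.smul_apply, ContinuousLinearMap.sum_apply,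
        ContinuousLinearMap.proj_apply, smul_eq_mul, hA, Matrix.mulVec_diagonal]
      rw [inner_sum_eq p.1 lam y]
      ring
    rw [happ, ← Finset.sum_add_distrib] at hpde
    rw [← hpde]
    apply Finset.sum_congr rfl
    intro p _
    ring
  -- now linear independence of pseudomonomial characters
  intro l k hne
  by_cases hmem : (l, k) ∈ c.support
  · have li : LinearIndependent ℂ
        (fun p : (Fin n → ℕ) × ℤ => (pmChar p : ((Fin n → ℂ) × Multiplicative ℝ) → ℂ)) :=
      (linearIndependent_monoidHom ((Fin n → ℂ) × Multiplicative ℝ) ℂ).comp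
        pmChar pmChar_injective
    rw [linearIndependent_iff'] at li
    have hsum : ∑ p ∈ c.support,
        (c p * (Complex.I * (p.2 : ℂ) + ∑ s, (p.1 s : ℂ) * lam s)) •
          (pmChar p : ((Fin n → ℂ) × Multiplicative ℝ) → ℂ) = 0 := by
      funext m
      have := key m.1 (Multiplicative.toAdd m.2)
      simpa [pmChar, Finset.sum_apply] using this
    have := li c.support _ hsum (l, k) hmem
    have hz : c (l, k) * (Complex.I * (k : ℂ) + ∑ s, (l s : ℂ) * lam s) = 0 := this
    rcases mul_eq_zero.mp hz with h | h
    · exact h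
    · exact absurd h hne
  · exact Finsupp.notMem_support_iff.mp hmem
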